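/- Under Assumption MD, a menu M ⊆ B is a minimal MP-optimal menu if and only if M is a minimal UE-optimal menu; that is, the collection of minimal optimal menus of the monopolist's virtual-surplus problem coincides with the collection of minimal optimal menus of the unconstrained upper-envelope problem. -/

import Mathlib

namespace Stmt1

abbrev Bundle (n : ℕ) := Finset (Fin n)

variable {n : ℕ}

/-- A stochastic bundle: nonnegative weights on bundles summing to one. -/
def IsStoch (a : Bundle n → ℝ) : Prop :=
  (∀ b, 0 ≤ a b) ∧ ∑ b, a b = 1

/-- The point mass at a bundle, viewed as a stochastic bundle. -/
def pt (b : Bundle n) : Bundle n → ℝ := fun b' => if b' = b then 1 else 0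

/-- Value of a stochastic bundle: linear extension of `v`. -/
def vA (v : Bundle n → ℝ → ℝ) (a : Bundle n → ℝ) (t : ℝ) : ℝ :=
  ∑ b, a b * v b t

/-- A direct mechanism: a (stochastic) allocation and a payment for each type. -/
structure Mech (n : ℕ) where
  alloc : ℝ → Bundle n → ℝ
  price : ℝ → ℝ

/-- A valid mechanism: the allocation at every type is a stochastic bundle, and the
mechanism is measurable. -/
def IsValidMech (t0 t1 : ℝ) (m : Mech n) : Prop :=
  (∀ t ∈ Set.Icc t0 t1, IsStoch (m.alloc t)) ∧
  (∀ b : Bundle n, Measurable fun t => m.alloc t b) ∧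
  Measurable m.price

/-- Incentive compatibility. -/
def IC (v : Bundle n → ℝ → ℝ) (t0 t1 : ℝ) (m : Mech n) : Prop :=
  ∀ t ∈ Set.Icc t0 t1, ∀ t' ∈ Set.Icc t0 t1,
    vA v (m.alloc t') t - m.price t' ≤ vA v (m.alloc t) t - m.price t

/-- Individual rationality. -/
def IR (v : Bundle n → ℝ → ℝ) (t0 t1 : ℝ) (m : Mech n) : Prop :=
  ∀ t ∈ Set.Icc t0 t1, 0 ≤ vA v (m.alloc t) t - m.price t

/-- Virtual-surplus value of a mechanism. -/
noncomputable def Vval (v φ : Bundle n → ℝ → ℝ) (f : ℝ → ℝ) (t0 t1 : ℝ) (m : Mech n) : ℝ :=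
  (∫ t in t0..t1, (∑ b, m.alloc t b * φ b t) * f t) -
    (vA v (m.alloc t0) t0 - m.price t0)

/-- An optimal mechanism: IC and IR, with the largest virtual-surplus value among all
IC and IR mechanisms. -/
def OptimalMech (v φ : Bundle n → ℝ → ℝ) (f : ℝ → ℝ) (t0 t1 : ℝ) (m : Mech n) : Prop :=
  IsValidMech t0 t1 m ∧ IC v t0 t1 m ∧ IR v t0 t1 m ∧
  ∀ m' : Mech n, IsValidMech t0 t1 m' → IC v t0 t1 m' → IR v t0 t1 m' →
    Vval v φ f t0 t1 m' ≤ Vval v φ f t0 t1 m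

/-- A menu is MP-optimal if some optimal mechanism allocates, at every type, a point
mass at some element of the menu. -/
def MPOptimal (v φ : Bundle n → ℝ → ℝ) (f : ℝ → ℝ) (t0 t1 : ℝ) (M : Finset (Bundle n)) :
    Prop :=
  ∃ m : Mech n, OptimalMech v φ f t0 t1 m ∧
    ∀ t ∈ Set.Icc t0 t1, ∃ b ∈ M, m.alloc t = pt b

/-- A minimal MP-optimal menu. -/
def MinimalMPOptimal (v φ : Bundle n → ℝ → ℝ) (f : ℝ → ℝ) (t0 t1 : ℝ)
    (M : Finset (Bundle n)) : Prop :=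
  MPOptimal v φ f t0 t1 M ∧
    ∀ M' : Finset (Bundle n), M' ⊂ M → ¬ MPOptimal v φ f t0 t1 M'

/-- A menu is UE-optimal if at every type some element attains the upper envelope
of the virtual value functions. -/
def UEOptimal (φ : Bundle n → ℝ → ℝ) (t0 t1 : ℝ) (M : Finset (Bundle n)) : Prop :=
  ∀ t ∈ Set.Icc t0 t1, ∃ b ∈ M, ∀ b' : Bundle n, φ b' t ≤ φ b t

/-- A minimal UE-optimal menu. -/
def MinimalUEOptimal (φ : Bundle n → ℝ → ℝ) (t0 t1 : ℝ) (M : Finset (Bundle n)) : Prop :=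
  UEOptimal φ t0 t1 M ∧ ∀ M' : Finset (Bundle n), M' ⊂ M → ¬ UEOptimal φ t0 t1 M'

/-! ### Auxiliary development -/

open MeasureTheory intervalIntegral Set Topology Filter

structure Ctx (n : ℕ) : Type where
  (t0 t1 : ℝ)
  ht : t0 < t1
  (f F : ℝ → ℝ)
  hf_cont : ContinuousOn f (Set.Icc t0 t1)
  hf_pos : ∀ t ∈ Set.Icc t0 t1, 0 < f t
  hF : ∀ t, F t = ∫ s in t0..t, f s
  hF1 : F t1 = 1
  (v vd : Bundle n → ℝ → ℝ)
  hv_deriv : ∀ b, ∀ t ∈ Set.Icc t0 t1, HasDerivWithinAt (v b) (vd b t) (Set.Icc t0 t1) t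
  hvd_cont : ∀ b, ContinuousOn (vd b) (Set.Icc t0 t1)
  hv_empty : ∀ t ∈ Set.Icc t0 t1, v ∅ t = 0
  (φ : Bundle n → ℝ → ℝ)
  hφ : ∀ b, ∀ t ∈ Set.Icc t0 t1, φ b t = v b t - ((1 - F t) / f t) * vd b t
  hempty0 : φ ∅ t0 = 0
  hneg : ∀ b : Bundle n, b ≠ ∅ → φ b t0 < 0
  hMD : ∀ b b', MonotoneOn (fun t => φ b t - φ b' t) (Set.Icc t0 t1) ∨
      AntitoneOn (fun t => φ b t - φ b' t) (Set.Icc t0 t1)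

namespace Ctx

variable (C : Ctx n)

/-- the type interval -/
def S : Set ℝ := Set.Icc C.t0 C.t1

lemma t0_mem : C.t0 ∈ C.S := ⟨le_refl _, C.ht.le⟩
lemma t1_mem : C.t1 ∈ C.S := ⟨C.ht.le, le_refl _⟩

lemma v_cont (b : Bundle n) : ContinuousOn (C.v b) C.S :=
  fun t ht => (C.hv_deriv b t ht).continuousWithinAt

lemma fint {x y : ℝ} (hx : x ∈ C.S) (hy : y ∈ C.S) :
    IntervalIntegrable C.f volume x y := by
  apply ContinuousOn.intervalIntegrable
  exact C.hf_cont.mono (Set.uIcc_subset_Icc hx hy)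

lemma F_cont : ContinuousOn C.F C.S := by
  have h : ContinuousOn (fun x => ∫ s in C.t0..x, C.f s) (Set.uIcc C.t0 C.t1) := by
    apply intervalIntegral.continuousOn_primitive_interval
    rw [Set.uIcc_of_le C.ht.le]
    exact C.hf_cont.integrableOn_Icc
  rw [Set.uIcc_of_le C.ht.le] at h
  exact h.congr (fun t _ => C.hF t)

lemma F_t0 : C.F C.t0 = 0 := by simp [C.hF]

lemma one_sub_F {t : ℝ} (ht : t ∈ C.S) : 1 - C.F t = ∫ s in t..C.t1, C.f s := by
  have := intervalIntegral.integral_add_adjacent_intervals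
    (C.fint C.t0_mem ht) (C.fint ht C.t1_mem)
  rw [← C.hF t, ← C.hF C.t1] at this
  rw [← C.hF1]; linarith

lemma intpos {t : ℝ} (ht0 : C.t0 ≤ t) (ht1 : t < C.t1) :
    0 < ∫ s in t..C.t1, C.f s := by
  apply intervalIntegral.intervalIntegral_pos_of_pos_on
  · exact C.fint ⟨ht0, ht1.le⟩ C.t1_mem
  · intro x hx
    exact C.hf_pos x ⟨ht0.trans hx.1.le, hx.2.le⟩
  · exact ht1

lemma one_sub_F_pos {t : ℝ} (ht0 : C.t0 ≤ t) (ht1 : t < C.t1) : 0 < 1 - C.F t := by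
  rw [C.one_sub_F ⟨ht0, ht1.le⟩]; exact C.intpos ht0 ht1

lemma one_sub_F_t1 : 1 - C.F C.t1 = 0 := by rw [C.hF1]; ring

lemma phi_cont (b : Bundle n) : ContinuousOn (C.φ b) C.S := by
  have : ContinuousOn (fun t => C.v b t - ((1 - C.F t) / C.f t) * C.vd b t) C.S := by
    apply (C.v_cont b).sub
    apply ContinuousOn.mul _ (C.hvd_cont b)
    apply ContinuousOn.div
    · exact (continuousOn_const).sub C.F_cont
    · exact C.hf_cont
    · intro t ht; exact (C.hf_pos t ht).ne'
  exact this.congr (fun t ht => C.hφ b t ht)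


/-- The fundamental identity: the value difference is the conditional expectation of
the virtual value difference. -/
lemma qlemma (b b' : Bundle n) {t : ℝ} (ht : t ∈ C.S) :
    (C.v b t - C.v b' t) * (1 - C.F t) =
      ∫ s in t..C.t1, (C.φ b s - C.φ b' s) * C.f s := by
  set q : ℝ → ℝ := fun s => (C.v b s - C.v b' s) * (1 - C.F s) with hq
  have key : ∫ s in t..C.t1, (-((C.φ b s - C.φ b' s) * C.f s)) = q C.t1 - q t := by
    apply intervalIntegral.integral_eq_sub_of_hasDeriv_right_of_le ht.2
    · apply ContinuousOn.mul
      · exact ((C.v_cont b).sub (C.v_cont b')).mono (Set.Icc_subset_Icc ht.1 le_rfl)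
      · exact (continuousOn_const.sub C.F_cont).mono (Set.Icc_subset_Icc ht.1 le_rfl)
    · intro x hx
      have hx0 : C.t0 < x := lt_of_le_of_lt ht.1 hx.1
      have hxS : x ∈ C.S := ⟨hx0.le, hx.2.le⟩
      have hnhds : Set.Icc C.t0 C.t1 ∈ 𝓝 x := Icc_mem_nhds hx0 hx.2
      have hvb : HasDerivAt (C.v b) (C.vd b x) x :=
        (C.hv_deriv b x hxS).hasDerivAt hnhds
      have hvb' : HasDerivAt (C.v b') (C.vd b' x) x :=
        (C.hv_deriv b' x hxS).hasDerivAt hnhds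
      have hFd : HasDerivAt C.F (C.f x) x := by
        have hprim : HasDerivAt (fun u => ∫ s in C.t0..u, C.f s) (C.f x) x := by
          apply intervalIntegral.integral_hasDerivAt_right (C.fint C.t0_mem hxS)
          · exact ⟨Set.Icc C.t0 C.t1, hnhds, C.hf_cont.aestronglyMeasurable measurableSet_Icc⟩
          · exact (C.hf_cont x hxS).continuousAt hnhds
        have : (fun u => ∫ s in C.t0..u, C.f s) = C.F := funext fun u => (C.hF u).symm
        rwa [this] at hprim
      have hd : HasDerivAt q
          ((C.vd b x - C.vd b' x) * (1 - C.F x) + (C.v b x - C.v b' x) * (-(C.f x))) x :=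
        (hvb.sub hvb').mul (hFd.const_sub 1)
      have heq : (C.vd b x - C.vd b' x) * (1 - C.F x) + (C.v b x - C.v b' x) * (-(C.f x))
          = -((C.φ b x - C.φ b' x) * C.f x) := by
        rw [C.hφ b x hxS, C.hφ b' x hxS]
        have hfx : C.f x ≠ 0 := (C.hf_pos x hxS).ne'
        field_simp
        ring
      rw [heq] at hd
      exact hd.hasDerivWithinAt
    · apply ContinuousOn.intervalIntegrable
      have hsub : Set.uIcc t C.t1 ⊆ C.S := Set.uIcc_subset_Icc ht C.t1_mem
      exact (((((C.phi_cont b).sub (C.phi_cont b')).mul C.hf_cont)).neg).mono hsub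
  have hq1 : q C.t1 = 0 := by simp [hq, C.one_sub_F_t1]
  rw [intervalIntegral.integral_neg] at key
  have : ∫ s in t..C.t1, (C.φ b s - C.φ b' s) * C.f s = q t - q C.t1 := by linarith
  rw [this, hq1]; simp [hq]

lemma gf_int {b b' : Bundle n} {x y : ℝ} (hx : x ∈ C.S) (hy : y ∈ C.S) :
    IntervalIntegrable (fun s => (C.φ b s - C.φ b' s) * C.f s) volume x y := by
  apply ContinuousOn.intervalIntegrable
  exact (((C.phi_cont b).sub (C.phi_cont b')).mul C.hf_cont).mono (Set.uIcc_subset_Icc hx hy)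

/-- Monotone virtual value differences imply monotone value differences. -/
lemma dmono {b b' : Bundle n} (h : MonotoneOn (fun t => C.φ b t - C.φ b' t) C.S) :
    MonotoneOn (fun t => C.v b t - C.v b' t) C.S := by
  set d : ℝ → ℝ := fun s => C.v b s - C.v b' s with hdd
  set g : ℝ → ℝ := fun s => C.φ b s - C.φ b' s with hgg
  -- main step: y < t1
  have key : ∀ x ∈ C.S, ∀ y ∈ C.S, x ≤ y → y < C.t1 → d x ≤ d y := by
    intro x hx y hy hxy hyt1
    have Ixpos : 0 < ∫ s in x..C.t1, C.f s := C.intpos hx.1 (lt_of_le_of_lt hxy hyt1)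
    have Iypos : 0 < ∫ s in y..C.t1, C.f s := C.intpos hy.1 hyt1
    have hqx : d x * (1 - C.F x) = ∫ s in x..C.t1, g s * C.f s := C.qlemma b b' hx
    have hqy : d y * (1 - C.F y) = ∫ s in y..C.t1, g s * C.f s := C.qlemma b b' hy
    have hFx : 1 - C.F x = ∫ s in x..C.t1, C.f s := C.one_sub_F hx
    have hFy : 1 - C.F y = ∫ s in y..C.t1, C.f s := C.one_sub_F hy
    have hsplit : (∫ s in x..C.t1, g s * C.f s)
        = (∫ s in x..y, g s * C.f s) + ∫ s in y..C.t1, g s * C.f s :=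
      (intervalIntegral.integral_add_adjacent_intervals (C.gf_int hx hy)
        (C.gf_int hy C.t1_mem)).symm
    have hfsplit : (∫ s in x..C.t1, C.f s)
        = (∫ s in x..y, C.f s) + ∫ s in y..C.t1, C.f s :=
      (intervalIntegral.integral_add_adjacent_intervals (C.fint hx hy)
        (C.fint hy C.t1_mem)).symm
    have hxyS : ∀ s ∈ Set.Icc x y, s ∈ C.S := fun s hs => ⟨hx.1.trans hs.1, hs.2.trans hy.2⟩
    have hyT : ∀ s ∈ Set.Icc y C.t1, s ∈ C.S := fun s hs => ⟨hy.1.trans hs.1, hs.2⟩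
    have h1 : (∫ s in x..y, g s * C.f s) ≤ ∫ s in x..y, g y * C.f s := by
      apply intervalIntegral.integral_mono_on hxy (C.gf_int hx hy)
      · exact (ContinuousOn.intervalIntegrable
          ((continuousOn_const.mul C.hf_cont).mono (Set.uIcc_subset_Icc hx hy)))
      · intro s hs
        have := h (hxyS s hs) hy hs.2
        have hf0 : 0 ≤ C.f s := (C.hf_pos s (hxyS s hs)).le
        exact mul_le_mul_of_nonneg_right this hf0
    have h2 : (∫ s in y..C.t1, g y * C.f s) ≤ ∫ s in y..C.t1, g s * C.f s := by
      apply intervalIntegral.integral_mono_on hyt1.le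
      · exact (ContinuousOn.intervalIntegrable
          ((continuousOn_const.mul C.hf_cont).mono (Set.uIcc_subset_Icc hy C.t1_mem)))
      · exact C.gf_int hy C.t1_mem
      · intro s hs
        have := h hy (hyT s hs) hs.1
        have hf0 : 0 ≤ C.f s := (C.hf_pos s (hyT s hs)).le
        exact mul_le_mul_of_nonneg_right this hf0
    rw [intervalIntegral.integral_const_mul] at h1 h2
    -- g y ≤ d y
    have hgy : g y ≤ d y := by
      have : g y * ∫ s in y..C.t1, C.f s ≤ d y * (1 - C.F y) := by
        rw [hqy]; exact h2
      rw [hFy] at this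
      exact le_of_mul_le_mul_right this Iypos
    have hfxy0 : 0 ≤ ∫ s in x..y, C.f s := by
      apply intervalIntegral.integral_nonneg hxy
      intro s hs; exact (C.hf_pos s (hxyS s hs)).le
    have : d x * (1 - C.F x) ≤ d y * (1 - C.F x) := by
      calc d x * (1 - C.F x) = (∫ s in x..y, g s * C.f s) + ∫ s in y..C.t1, g s * C.f s := by
            rw [hqx, hsplit]
        _ ≤ g y * (∫ s in x..y, C.f s) + d y * (1 - C.F y) := by rw [hqy]; linarith
        _ ≤ d y * (∫ s in x..y, C.f s) + d y * (1 - C.F y) := by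
            have := mul_le_mul_of_nonneg_right hgy hfxy0
            linarith
        _ = d y * (1 - C.F x) := by rw [hFx, hFy, hfsplit]; ring
    rw [hFx] at this
    exact le_of_mul_le_mul_right this Ixpos
  intro x hx y hy hxy
  rcases lt_or_eq_of_le hxy with hlt | heq
  · rcases lt_or_eq_of_le hy.2 with hyt1 | hyt1
    · exact key x hx y hy hxy hyt1
    · -- y = t1, limit argument
      subst hyt1
      have hcont : ContinuousWithinAt d (Set.Ico x C.t1) C.t1 := by
        apply ContinuousWithinAt.mono _ (fun s hs => (⟨hx.1.trans hs.1, hs.2.le⟩ : s ∈ C.S))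
        exact ((C.v_cont b).sub (C.v_cont b')) C.t1 C.t1_mem
      haveI hne : (𝓝[Set.Ico x C.t1] C.t1).NeBot := right_nhdsWithin_Ico_neBot hlt
      apply ge_of_tendsto hcont
      filter_upwards [self_mem_nhdsWithin] with z hz
      exact key x hx z ⟨hx.1.trans hz.1, hz.2.le⟩ hz.1 hz.2
  · subst heq; exact le_rfl


/-! ### The argmax sets and the chain construction -/

open scoped Classical

/-- The set of types at which `b` attains the upper envelope. -/
def T (b : Bundle n) : Set ℝ := {t | t ∈ C.S ∧ ∀ b', C.φ b' t ≤ C.φ b t}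

lemma T_subset (b : Bundle n) : C.T b ⊆ C.S := fun _ ht => ht.1

lemma T_closed (b : Bundle n) : IsClosed (C.T b) := by
  have : C.T b = ⋂ b' : Bundle n,
      (C.S ∩ (fun t => C.φ b' t - C.φ b t) ⁻¹' Set.Iic 0) := by
    ext t
    simp only [T, Set.mem_iInter, Set.mem_inter_iff, Set.mem_preimage, Set.mem_Iic,
      Set.mem_setOf_eq]
    constructor
    · rintro ⟨hS, h⟩ b'; exact ⟨hS, by linarith [h b']⟩
    · intro h; exact ⟨(h ∅).1, fun b' => by linarith [(h b').2]⟩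
  rw [this]
  exact isClosed_iInter fun b' =>
    ((C.phi_cont b').sub (C.phi_cont b)).preimage_isClosed_of_isClosed isClosed_Icc isClosed_Iic

lemma T_compact (b : Bundle n) : IsCompact (C.T b) :=
  isCompact_Icc.of_isClosed_subset (C.T_closed b) (C.T_subset b)

lemma T_between {b : Bundle n} {x y z : ℝ} (hx : x ∈ C.T b) (hy : y ∈ C.T b)
    (hz : z ∈ Set.Icc x y) : z ∈ C.T b := by
  have hzS : z ∈ C.S := ⟨hx.1.1.trans hz.1, hz.2.trans hy.1.2⟩
  refine ⟨hzS, fun b' => ?_⟩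
  rcases C.hMD b' b with hmono | hanti
  · have := hmono hzS hy.1 hz.2
    have h2 := hy.2 b'
    simp only at this
    linarith
  · have := hanti hx.1 hzS hz.1
    have h2 := hx.2 b'
    simp only at this
    linarith

/-- right endpoint of the argmax interval -/
noncomputable def beta (b : Bundle n) : ℝ := sSup (C.T b)

lemma beta_mem {b : Bundle n} (hb : (C.T b).Nonempty) : C.beta b ∈ C.T b :=
  (C.T_compact b).sSup_mem hb

lemma le_beta {b : Bundle n} {t : ℝ} (ht : t ∈ C.T b) : t ≤ C.beta b :=
  le_csSup (C.T_compact b).bddAbove ht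

lemma t0_mem_T_empty : C.t0 ∈ C.T (∅ : Bundle n) := by
  refine ⟨C.t0_mem, fun b' => ?_⟩
  rcases eq_or_ne b' ∅ with h | h
  · subst h; exact le_rfl
  · rw [C.hempty0]; exact (C.hneg b' h).le

lemma chain_from (M : Finset (Bundle n)) (hcov : ∀ t ∈ C.S, ∃ b ∈ M, t ∈ C.T b) :
    ∀ (N : ℕ) (b0 : Bundle n), b0 ∈ M → (C.T b0).Nonempty →
    (M.filter (fun b => (C.T b).Nonempty ∧ C.beta b0 < C.beta b)).card ≤ N →
    ∃ (k : ℕ) (bs : ℕ → Bundle n),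
      bs 0 = b0 ∧ C.beta (bs k) = C.t1 ∧
      (∀ i ≤ k, bs i ∈ M ∧ (C.T (bs i)).Nonempty) ∧
      (∀ i < k, C.beta (bs i) ∈ C.T (bs (i+1)) ∧ C.beta (bs i) < C.beta (bs (i+1)) ∧
        MonotoneOn (fun t => C.φ (bs (i+1)) t - C.φ (bs i) t) C.S) := by
  have key : ∀ (N : ℕ) (b0 : Bundle n), b0 ∈ M → (C.T b0).Nonempty →
      (M.filter (fun b => (C.T b).Nonempty ∧ C.beta b0 < C.beta b)).card ≤ N →
      C.beta b0 < C.t1 →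
      ∃ c ∈ M, (C.T c).Nonempty ∧ C.beta b0 ∈ C.T c ∧ C.beta b0 < C.beta c ∧
        MonotoneOn (fun t => C.φ c t - C.φ b0 t) C.S := by
    intro N b0 hb0M hb0ne _ hβlt
    set W := M.filter (fun b => (C.T b).Nonempty ∧ C.beta b0 < C.beta b) with hW
    -- W is nonempty
    obtain ⟨bt1, hbt1M, hbt1T⟩ := hcov C.t1 C.t1_mem
    have hbt1β : C.beta bt1 = C.t1 :=
      le_antisymm (C.beta_mem ⟨_, hbt1T⟩).1.2 (C.le_beta hbt1T)
    have hWne : W.Nonempty := ⟨bt1, Finset.mem_filter.2 ⟨hbt1M, ⟨_, hbt1T⟩, by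
      rw [hbt1β]; exact hβlt⟩⟩
    -- the minimum left endpoint among W
    set γ := W.inf' hWne (fun c => sInf (C.T c)) with hγ
    have hγle : γ ≤ C.beta b0 := by
      by_contra hcon
      push_neg at hcon
      set x := (C.beta b0 + γ) / 2 with hx
      have hβb0S : C.beta b0 ∈ C.S := (C.beta_mem (by assumption)).1
      have hγt1 : γ ≤ C.t1 := by
        obtain ⟨c, hcW, hc⟩ := Finset.exists_mem_eq_inf' hWne (fun c => sInf (C.T c))
        have hcne : (C.T c).Nonempty := (Finset.mem_filter.1 hcW).2.1
        have := ((C.T_compact c).sInf_mem hcne).1.2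
        rw [hγ, hc]; exact this
      have hx1 : x < γ := by rw [hx]; linarith
      have hx2 : C.beta b0 < x := by rw [hx]; linarith
      have hxS : x ∈ C.S := ⟨hβb0S.1.trans hx2.le, hx1.le.trans hγt1⟩
      obtain ⟨cx, hcxM, hcxT⟩ := hcov x hxS
      have hcxW : cx ∈ W := Finset.mem_filter.2 ⟨hcxM, ⟨_, hcxT⟩,
        lt_of_lt_of_le hx2 (C.le_beta hcxT)⟩
      have hsinf : sInf (C.T cx) ≤ x := csInf_le (C.T_compact cx).bddBelow hcxT
      have : γ ≤ x := le_trans (Finset.inf'_le _ hcxW) hsinf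
      linarith
    -- pick the W-element achieving γ
    obtain ⟨c, hcW, hc⟩ := Finset.exists_mem_eq_inf' hWne (fun c => sInf (C.T c))
    have hcM : c ∈ M := (Finset.mem_filter.1 hcW).1
    have hcne : (C.T c).Nonempty := (Finset.mem_filter.1 hcW).2.1
    have hcβ : C.beta b0 < C.beta c := (Finset.mem_filter.1 hcW).2.2
    have hsinfc : sInf (C.T c) ∈ C.T c := (C.T_compact c).sInf_mem hcne
    have hβb0Tc : C.beta b0 ∈ C.T c := by
      apply C.T_between hsinfc (C.beta_mem hcne)
      constructor
      · rw [hγ, hc] at hγle; exact hγle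
      · exact hcβ.le
    refine ⟨c, hcM, hcne, hβb0Tc, hcβ, ?_⟩
    rcases C.hMD c b0 with hmono | hanti
    · exact hmono
    · -- antitone case: contradiction
      exfalso
      have hs : C.beta b0 ∈ C.T b0 := C.beta_mem (by assumption)
      have hgs : C.φ c (C.beta b0) - C.φ b0 (C.beta b0) ≤ 0 := by
        have := hs.2 c; linarith
      have hu : C.beta c ∈ C.T c := C.beta_mem hcne
      have hgu : C.φ c (C.beta c) - C.φ b0 (C.beta c) ≤ 0 := by
        have := hanti hs.1 hu.1 hcβ.le
        simp only at this
        linarith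
    -- equality => β c ∈ T b0 => contradiction with β b0 < β c
      have hgu' : 0 ≤ C.φ c (C.beta c) - C.φ b0 (C.beta c) := by
        have := hu.2 b0; linarith
      have hequ : C.φ b0 (C.beta c) = C.φ c (C.beta c) := by linarith
      have : C.beta c ∈ C.T b0 := ⟨hu.1, fun b'' => by rw [hequ]; exact hu.2 b''⟩
      have := C.le_beta this
      linarith
  intro N
  induction N with
  | zero =>
    intro b0 hb0M hb0ne hcard
    rcases eq_or_lt_of_le (C.beta_mem hb0ne).1.2 with hβ | hβlt
    · exact ⟨0, fun _ => b0, rfl, hβ, fun i _ => ⟨hb0M, hb0ne⟩, fun i hi => absurd hi (Nat.not_lt_zero i)⟩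
    · exfalso
      obtain ⟨c, hcM, hcne, _, hcβ, _⟩ := key 0 b0 hb0M hb0ne hcard hβlt
      have : c ∈ M.filter (fun b => (C.T b).Nonempty ∧ C.beta b0 < C.beta b) :=
        Finset.mem_filter.2 ⟨hcM, hcne, hcβ⟩
      have := Finset.card_pos.2 ⟨c, this⟩
      omega
  | succ N ih =>
    intro b0 hb0M hb0ne hcard
    rcases eq_or_lt_of_le (C.beta_mem hb0ne).1.2 with hβ | hβlt
    · exact ⟨0, fun _ => b0, rfl, hβ, fun i _ => ⟨hb0M, hb0ne⟩, fun i hi => absurd hi (Nat.not_lt_zero i)⟩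
    · obtain ⟨c, hcM, hcne, hcT, hcβ, hcmono⟩ := key (N+1) b0 hb0M hb0ne hcard hβlt
      have hcard' : (M.filter (fun b => (C.T b).Nonempty ∧ C.beta c < C.beta b)).card ≤ N := by
        have hss : (M.filter (fun b => (C.T b).Nonempty ∧ C.beta c < C.beta b)) ⊂
            (M.filter (fun b => (C.T b).Nonempty ∧ C.beta b0 < C.beta b)) := by
          constructor
          · intro b hb
            rw [Finset.mem_filter] at hb ⊢
            exact ⟨hb.1, hb.2.1, hcβ.trans hb.2.2⟩
          · intro hsub
            have hc1 : c ∈ M.filter (fun b => (C.T b).Nonempty ∧ C.beta b0 < C.beta b) :=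
              Finset.mem_filter.2 ⟨hcM, hcne, hcβ⟩
            have := hsub hc1
            rw [Finset.mem_filter] at this
            exact absurd this.2.2 (lt_irrefl _)
        have := Finset.card_lt_card hss
        omega
      obtain ⟨k', bs', h0', hk', hmem', hstep'⟩ := ih c hcM hcne hcard'
      refine ⟨k' + 1, fun i => Nat.casesOn i b0 bs', rfl, hk', ?_, ?_⟩
      · intro i hi
        cases i with
        | zero => exact ⟨hb0M, hb0ne⟩
        | succ j => exact hmem' j (Nat.succ_le_succ_iff.1 hi)
      · intro i hi
        cases i with
        | zero =>
          simp only
          rw [h0']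
          exact ⟨hcT, hcβ, hcmono⟩
        | succ j => exact hstep' j (Nat.succ_lt_succ_iff.1 hi)


/-! ### The upper envelope -/

/-- The upper envelope of the virtual values. -/
noncomputable def G (t : ℝ) : ℝ :=
  Finset.univ.sup' ⟨∅, Finset.mem_univ _⟩ (fun b : Bundle n => C.φ b t)

lemma phi_le_G (b : Bundle n) (t : ℝ) : C.φ b t ≤ C.G t := by
  simp only [G]
  exact Finset.le_sup' (fun b : Bundle n => C.φ b t) (Finset.mem_univ b)

lemma G_eq {b : Bundle n} {t : ℝ} (ht : t ∈ C.T b) : C.G t = C.φ b t := by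
  refine le_antisymm ?_ (C.phi_le_G b t)
  simp only [G]
  exact Finset.sup'_le _ (fun b' : Bundle n => C.φ b' t) fun b' _ => ht.2 b' 

lemma G_cont : ContinuousOn C.G C.S :=
  ContinuousOn.finset_sup'_apply _ (fun b _ => C.phi_cont b)

/-! ### The mechanism associated with a chain -/

end Ctx


lemma vA_pt (v : Bundle n → ℝ → ℝ) (c : Bundle n) (t : ℝ) : vA v (pt c) t = v c t := by
  simp [vA, pt, ite_mul]

lemma sum_pt_mul (g : Bundle n → ℝ) (c : Bundle n) : (∑ b, pt c b * g b) = g c := by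
  simp [pt, ite_mul]

/-- A chain of bundles covering the interval with increasing argmax windows. -/
structure Chain (C : Ctx n) (M : Finset (Bundle n)) where
  k : ℕ
  bs : ℕ → Bundle n
  h0 : bs 0 = ∅
  hk : C.beta (bs k) = C.t1
  hmem : ∀ i ≤ k, bs i ∈ M ∧ (C.T (bs i)).Nonempty
  hstep : ∀ i < k, C.beta (bs i) ∈ C.T (bs (i+1)) ∧ C.beta (bs i) < C.beta (bs (i+1)) ∧
    MonotoneOn (fun t => C.φ (bs (i+1)) t - C.φ (bs i) t) C.S

namespace Chain

variable {C : Ctx n} {M : Finset (Bundle n)} (ch : Chain C M)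

/-- The breakpoints. -/
noncomputable def ss : ℕ → ℝ := fun i => match i with
  | 0 => C.t0
  | (j+1) => C.beta (ch.bs j)

lemma ss_zero : ch.ss 0 = C.t0 := rfl

lemma ss_mem {i : ℕ} (hi : i ≤ ch.k + 1) : ch.ss i ∈ C.S := by
  cases i with
  | zero => exact C.t0_mem
  | succ j =>
    exact (C.beta_mem (ch.hmem j (Nat.succ_le_succ_iff.1 hi)).2).1

lemma ss_le_succ {i : ℕ} (hi : i ≤ ch.k) : ch.ss i ≤ ch.ss (i+1) := by
  cases i with
  | zero => exact (C.beta_mem (ch.hmem 0 (Nat.zero_le _)).2).1.1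
  | succ j => exact ((ch.hstep j hi).2.1).le

lemma ss_mono {i j : ℕ} (hij : i ≤ j) (hj : j ≤ ch.k + 1) : ch.ss i ≤ ch.ss j := by
  induction j with
  | zero => simp_all
  | succ m ih =>
    rcases Nat.le_succ_iff.mp hij with h | h
    · calc ch.ss i ≤ ch.ss m := ih h (le_trans (Nat.le_succ m) hj)
        _ ≤ ch.ss (m+1) := ch.ss_le_succ (Nat.succ_le_succ_iff.1 hj)
    · rw [h]
  -- fallback
  
lemma ss_last : ch.ss (ch.k + 1) = C.t1 := ch.hk

lemma piece_subset {i : ℕ} (hi : i ≤ ch.k) :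
    Set.Icc (ch.ss i) (ch.ss (i+1)) ⊆ C.T (ch.bs i) := by
  have hr : ch.ss (i+1) ∈ C.T (ch.bs i) := C.beta_mem (ch.hmem i hi).2
  have hl : ch.ss i ∈ C.T (ch.bs i) := by
    cases i with
    | zero => rw [ch.h0]; exact C.t0_mem_T_empty
    | succ j => exact (ch.hstep j hi).1
  intro t htI
  exact C.T_between hl hr htI

/-- the index of the piece containing `t` -/
noncomputable def idx (t : ℝ) : ℕ := Nat.findGreatest (fun i => ch.ss i ≤ t) ch.k

lemma idx_le (t : ℝ) : ch.idx t ≤ ch.k := Nat.findGreatest_le _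

lemma ss_idx_le {t : ℝ} (ht : C.t0 ≤ t) : ch.ss (ch.idx t) ≤ t := by
  have h0 : ch.ss 0 ≤ t := ht
  exact Nat.findGreatest_spec (P := fun i => ch.ss i ≤ t) (Nat.zero_le _) h0

lemma le_ss_idx_succ {t : ℝ} (ht : t ≤ C.t1) : t ≤ ch.ss (ch.idx t + 1) := by
  rcases lt_or_eq_of_le (ch.idx_le t) with hlt | heq
  · have := Nat.findGreatest_is_greatest (P := fun i => ch.ss i ≤ t)
      (Nat.lt_succ_self _) hlt
    exact (not_le.1 this).le
  · rw [heq, ch.ss_last]; exact ht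

/-- the menu prices -/
noncomputable def pr : ℕ → ℝ := fun j => ∑ l ∈ Finset.range j,
  (C.v (ch.bs (l+1)) (ch.ss (l+1)) - C.v (ch.bs l) (ch.ss (l+1)))

lemma pr_zero : ch.pr 0 = 0 := by simp [pr]

/-- utility of contract `j` to type `t` -/
noncomputable def U (t : ℝ) (j : ℕ) : ℝ := C.v (ch.bs j) t - ch.pr j

lemma U_succ (t : ℝ) (j : ℕ) : ch.U t (j+1) = ch.U t j +
    ((C.v (ch.bs (j+1)) t - C.v (ch.bs j) t) -
     (C.v (ch.bs (j+1)) (ch.ss (j+1)) - C.v (ch.bs j) (ch.ss (j+1)))) := by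
  simp only [U, pr, Finset.sum_range_succ]
  ring

lemma dmono' {j : ℕ} (hj : j < ch.k) :
    MonotoneOn (fun t => C.v (ch.bs (j+1)) t - C.v (ch.bs j) t) C.S :=
  C.dmono (ch.hstep j hj).2.2

lemma U_up {t : ℝ} (htS : t ∈ C.S) {a b : ℕ} (hab : a ≤ b) (hb : b ≤ ch.k)
    (ht : t ≤ ch.ss (a+1)) : ch.U t b ≤ ch.U t a := by
  induction b, hab using Nat.le_induction with
  | base => exact le_rfl
  | succ b hab ih =>
    have hbk : b < ch.k := hb
    have h1 : ch.U t b ≤ ch.U t a := ih hbk.le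
    have hsb : ch.ss (b+1) ∈ C.S := ch.ss_mem (Nat.succ_le_succ hbk.le)
    have hts : t ≤ ch.ss (b+1) :=
      le_trans ht (ch.ss_mono (Nat.succ_le_succ hab) (Nat.succ_le_succ hbk.le))
    have hmono := ch.dmono' hbk htS hsb hts
    rw [ch.U_succ t b]
    simp only at hmono
    linarith

lemma U_down {t : ℝ} (htS : t ∈ C.S) {a b : ℕ} (hab : a ≤ b) (hb : b ≤ ch.k)
    (ht : ch.ss b ≤ t) : ch.U t a ≤ ch.U t b := by
  induction b, hab using Nat.le_induction with
  | base => exact le_rfl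
  | succ b hab ih =>
    have hbk : b < ch.k := hb
    have h1 : ch.U t a ≤ ch.U t b := by
      apply ih hbk.le
      exact le_trans (ch.ss_le_succ hbk.le) ht
    have hsb : ch.ss (b+1) ∈ C.S := ch.ss_mem (Nat.succ_le_succ hbk.le)
    have hmono := ch.dmono' hbk hsb htS ht
    rw [ch.U_succ t b]
    simp only at hmono
    linarith

lemma U_max {t : ℝ} (htS : t ∈ C.S) {j : ℕ} (hj : j ≤ ch.k) :
    ch.U t j ≤ ch.U t (ch.idx t) := by
  rcases le_total j (ch.idx t) with h | h
  · exact ch.U_down htS h (ch.idx_le t) (ch.ss_idx_le htS.1)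
  · exact ch.U_up htS h hj (ch.le_ss_idx_succ htS.2)

lemma U_zero {t : ℝ} (htS : t ∈ C.S) : ch.U t 0 = 0 := by
  simp [U, pr_zero, ch.h0, C.hv_empty t htS]

lemma U_t0_idx : ch.U C.t0 (ch.idx C.t0) = 0 := by
  have main : ∀ j ≤ ch.k, ch.ss j ≤ C.t0 → ch.U C.t0 j = 0 := by
    intro j
    induction j with
    | zero => intro _ _; exact ch.U_zero C.t0_mem
    | succ m ih =>
      intro hj hss
      have hmem : ch.ss (m+1) ∈ C.S := ch.ss_mem (Nat.succ_le_succ (Nat.le_of_succ_le hj))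
      have heq : ch.ss (m+1) = C.t0 := le_antisymm hss hmem.1
      have hm : ch.ss m ≤ C.t0 := le_trans (ch.ss_le_succ (Nat.lt_of_succ_le hj).le) hss
      rw [ch.U_succ, ih (Nat.le_of_succ_le hj) hm, heq]
      ring
  exact main _ (ch.idx_le _) (ch.ss_idx_le le_rfl)


lemma idx_eq_sum (t : ℝ) :
    ch.idx t = ∑ i ∈ Finset.range ch.k, if ch.ss (i+1) ≤ t then 1 else 0 := by
  have main : ∀ m, m ≤ ch.k → Nat.findGreatest (fun i => ch.ss i ≤ t) m
      = ∑ i ∈ Finset.range m, if ch.ss (i+1) ≤ t then 1 else 0 := by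
    intro m
    induction m with
    | zero => intro _; simp
    | succ m ih =>
      intro hm
      rw [Nat.findGreatest_succ, Finset.sum_range_succ]
      by_cases h : ch.ss (m+1) ≤ t
      · simp only [h, if_true]
        have hcong : ∀ i ∈ Finset.range m, (if ch.ss (i+1) ≤ t then (1:ℕ) else 0) = 1 := by
          intro i hi
          have hile : ch.ss (i+1) ≤ ch.ss (m+1) :=
            ch.ss_mono (Nat.succ_le_succ (Finset.mem_range.1 hi).le) (Nat.le_succ_of_le hm)
          simp [le_trans hile h]
        rw [Finset.sum_congr rfl hcong]
        simp
      · simp only [h, if_false]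
        rw [ih (Nat.le_of_succ_le hm)]
        simp
  exact main ch.k le_rfl

lemma idx_measurable : Measurable ch.idx := by
  have heq : ch.idx = fun t => ∑ i ∈ Finset.range ch.k, if ch.ss (i+1) ≤ t then 1 else 0 :=
    funext ch.idx_eq_sum
  rw [heq]
  apply Finset.measurable_sum
  intro i _
  exact Measurable.ite measurableSet_Ici measurable_const measurable_const

/-- The optimal mechanism associated with a chain. -/
noncomputable def mech : Mech n :=
  ⟨fun t => pt (ch.bs (ch.idx t)), fun t => ch.pr (ch.idx t)⟩

lemma mech_valid : IsValidMech C.t0 C.t1 ch.mech := by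
  refine ⟨fun t _ => ⟨fun b => ?_, ?_⟩, fun b => ?_, ?_⟩
  · dsimp [mech, pt]; split <;> norm_num
  · show ∑ b, pt (ch.bs (ch.idx t)) b = 1
    simp [pt]
  · show Measurable fun t => pt (ch.bs (ch.idx t)) b
    exact (measurable_from_nat (f := fun j => pt (ch.bs j) b)).comp ch.idx_measurable
  · show Measurable fun t => ch.pr (ch.idx t)
    exact (measurable_from_nat (f := fun j => ch.pr j)).comp ch.idx_measurable

lemma mech_IC : IC C.v C.t0 C.t1 ch.mech := by
  intro t ht t' _
  show vA C.v (pt (ch.bs (ch.idx t'))) t - ch.pr (ch.idx t') ≤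
    vA C.v (pt (ch.bs (ch.idx t))) t - ch.pr (ch.idx t)
  rw [vA_pt, vA_pt]
  exact ch.U_max ht (ch.idx_le t')

lemma mech_IR : IR C.v C.t0 C.t1 ch.mech := by
  intro t ht
  show 0 ≤ vA C.v (pt (ch.bs (ch.idx t))) t - ch.pr (ch.idx t)
  rw [vA_pt]
  have h1 := ch.U_max ht (Nat.zero_le ch.k)
  have h2 := ch.U_zero ht
  simp only [U] at h1 h2
  linarith

lemma mech_alloc_pt {t : ℝ} (_ : t ∈ C.S) : ∃ b ∈ M, ch.mech.alloc t = pt b :=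
  ⟨ch.bs (ch.idx t), (ch.hmem _ (ch.idx_le t)).1, rfl⟩

lemma mech_Vval : Vval C.v C.φ C.f C.t0 C.t1 ch.mech
    = ∫ t in C.t0..C.t1, C.G t * C.f t := by
  unfold Vval
  have h1 : vA C.v (ch.mech.alloc C.t0) C.t0 - ch.mech.price C.t0 = 0 := by
    show vA C.v (pt (ch.bs (ch.idx C.t0))) C.t0 - ch.pr (ch.idx C.t0) = 0
    rw [vA_pt]
    exact ch.U_t0_idx
  rw [h1, sub_zero]
  apply intervalIntegral.integral_congr
  intro t ht
  rw [Set.uIcc_of_le C.ht.le] at ht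
  have hidx : t ∈ C.T (ch.bs (ch.idx t)) :=
    ch.piece_subset (ch.idx_le t) ⟨ch.ss_idx_le ht.1, ch.le_ss_idx_succ ht.2⟩
  have h2 : (∑ b, ch.mech.alloc t b * C.φ b t) = C.φ (ch.bs (ch.idx t)) t := by
    show (∑ b, pt (ch.bs (ch.idx t)) b * C.φ b t) = _
    exact sum_pt_mul _ _
  show (∑ b, ch.mech.alloc t b * C.φ b t) * C.f t = C.G t * C.f t
  rw [h2, C.G_eq hidx]

end Chain
namespace Ctx
variable (C : Ctx n)


lemma integrand_intInt (m : Mech n) (hval : IsValidMech C.t0 C.t1 m) :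
    IntervalIntegrable (fun t => (∑ b, m.alloc t b * C.φ b t) * C.f t) volume C.t0 C.t1 := by
  rw [intervalIntegrable_iff_integrableOn_Ioc_of_le C.ht.le]
  have hbound : IntegrableOn (fun t => ∑ b : Bundle n, |C.φ b t * C.f t|)
      (Set.Ioc C.t0 C.t1) volume := by
    apply IntegrableOn.mono_set _ Set.Ioc_subset_Icc_self
    apply ContinuousOn.integrableOn_Icc
    apply continuousOn_finset_sum
    intro b _
    exact ((C.phi_cont b).mul C.hf_cont).abs
  apply MeasureTheory.Integrable.mono' hbound
  · have heq : (fun t => (∑ b, m.alloc t b * C.φ b t) * C.f t)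
        = fun t => ∑ b, m.alloc t b * (C.φ b t * C.f t) := by
      funext t
      rw [Finset.sum_mul]
      apply Finset.sum_congr rfl
      intro b _
      ring
    rw [heq]
    apply Finset.aestronglyMeasurable_fun_sum
    intro b _
    apply AEStronglyMeasurable.mul
    · exact (hval.2.1 b).aestronglyMeasurable
    · exact (((C.phi_cont b).mul C.hf_cont).aestronglyMeasurable measurableSet_Icc).mono_measure
        (Measure.restrict_mono Set.Ioc_subset_Icc_self le_rfl)
  · rw [ae_restrict_iff' measurableSet_Ioc]
    apply ae_of_all
    intro t ht
    have htS : t ∈ C.S := Set.Ioc_subset_Icc_self ht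
    obtain ⟨hnn, hsum⟩ := hval.1 t htS
    rw [Real.norm_eq_abs]
    calc |(∑ b, m.alloc t b * C.φ b t) * C.f t|
        = |∑ b, m.alloc t b * (C.φ b t * C.f t)| := by
          rw [Finset.sum_mul]
          congr 1
          apply Finset.sum_congr rfl
          intro b _
          ring
      _ ≤ ∑ b, |m.alloc t b * (C.φ b t * C.f t)| := Finset.abs_sum_le_sum_abs _ _
      _ ≤ ∑ b, |C.φ b t * C.f t| := by
          apply Finset.sum_le_sum
          intro b _
          rw [abs_mul]
          have h1 : |m.alloc t b| ≤ 1 := by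
            rw [abs_of_nonneg (hnn b)]
            calc m.alloc t b ≤ ∑ b', m.alloc t b' :=
                  Finset.single_le_sum (fun b' _ => hnn b') (Finset.mem_univ b)
              _ = 1 := hsum
          exact mul_le_of_le_one_left (abs_nonneg _) h1

lemma vval_le (m : Mech n) (hval : IsValidMech C.t0 C.t1 m) (hIR : IR C.v C.t0 C.t1 m)
    (Ψ : ℝ → ℝ) (hΨ : ContinuousOn Ψ C.S)
    (hle : ∀ t ∈ C.S, (∑ b, m.alloc t b * C.φ b t) ≤ Ψ t) :
    Vval C.v C.φ C.f C.t0 C.t1 m ≤ ∫ t in C.t0..C.t1, Ψ t * C.f t := by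
  have h0 : 0 ≤ vA C.v (m.alloc C.t0) C.t0 - m.price C.t0 := hIR C.t0 C.t0_mem
  have hmono : (∫ t in C.t0..C.t1, (∑ b, m.alloc t b * C.φ b t) * C.f t)
      ≤ ∫ t in C.t0..C.t1, Ψ t * C.f t := by
    apply intervalIntegral.integral_mono_on C.ht.le (C.integrand_intInt m hval)
    · apply ContinuousOn.intervalIntegrable
      rw [Set.uIcc_of_le C.ht.le]
      exact hΨ.mul C.hf_cont
    · intro t htS
      exact mul_le_mul_of_nonneg_right (hle t htS) (C.hf_pos t htS).le
  unfold Vval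
  linarith

lemma integral_zero_on (h : ℝ → ℝ) (hc : ContinuousOn h C.S)
    (hnn : ∀ t ∈ C.S, 0 ≤ h t) (hint : (∫ t in C.t0..C.t1, h t) ≤ 0) :
    ∀ t ∈ C.S, h t = 0 := by
  by_contra hcon
  push_neg at hcon
  obtain ⟨t₂, ht₂S, ht₂⟩ := hcon
  have hpos : 0 < h t₂ := lt_of_le_of_ne (hnn _ ht₂S) (Ne.symm ht₂)
  have hmem : h ⁻¹' Set.Ioi (h t₂ / 2) ∈ nhdsWithin t₂ C.S :=
    (hc t₂ ht₂S) (Ioi_mem_nhds (by linarith))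
  rw [mem_nhdsWithin] at hmem
  obtain ⟨Uo, hUo, ht₂U, hUsub⟩ := hmem
  obtain ⟨δ, hδ, hball⟩ := Metric.isOpen_iff.1 hUo t₂ ht₂U
  set a := max C.t0 (t₂ - δ/2) with ha
  set b := min C.t1 (t₂ + δ/2) with hb
  have hab : a < b := by
    apply max_lt
    · apply lt_min C.ht
      linarith [ht₂S.1]
    · apply lt_min
      · linarith [ht₂S.2]
      · linarith
  have haS : C.t0 ≤ a := le_max_left _ _
  have hbS : b ≤ C.t1 := min_le_left _ _
  have hIccS : Set.Icc a b ⊆ C.S := fun x hx => ⟨haS.trans hx.1, hx.2.trans hbS⟩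
  have hIccgt : ∀ x ∈ Set.Icc a b, h t₂ / 2 < h x := by
    intro x hx
    have hxu : x ≤ t₂ + δ/2 := hx.2.trans (min_le_right _ _)
    have hxl : t₂ - δ/2 ≤ x := (le_max_right _ _).trans hx.1
    have hxball : x ∈ Metric.ball t₂ δ := by
      rw [Metric.mem_ball, Real.dist_eq]
      have : |x - t₂| ≤ δ/2 := abs_le.mpr ⟨by linarith, by linarith⟩
      linarith
    exact hUsub ⟨hball hxball, hIccS hx⟩
  have hi1 : IntervalIntegrable h volume C.t0 a := by
    apply ContinuousOn.intervalIntegrable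
    apply hc.mono
    rw [Set.uIcc_of_le haS]
    exact fun x hx => ⟨hx.1, hx.2.trans (hab.le.trans hbS)⟩
  have hi2 : IntervalIntegrable h volume a b := by
    apply ContinuousOn.intervalIntegrable
    apply hc.mono
    rw [Set.uIcc_of_le hab.le]
    exact hIccS
  have hi3 : IntervalIntegrable h volume b C.t1 := by
    apply ContinuousOn.intervalIntegrable
    apply hc.mono
    rw [Set.uIcc_of_le hbS]
    exact fun x hx => ⟨(haS.trans hab.le).trans hx.1, hx.2⟩
  have hsplit : (∫ t in C.t0..C.t1, h t)
      = (∫ t in C.t0..a, h t) + (∫ t in a..b, h t) + ∫ t in b..C.t1, h t := by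
    rw [intervalIntegral.integral_add_adjacent_intervals hi1 hi2,
      intervalIntegral.integral_add_adjacent_intervals (hi1.trans hi2) hi3]
  have h01 : 0 ≤ ∫ t in C.t0..a, h t := by
    apply intervalIntegral.integral_nonneg haS
    intro u hu
    exact hnn u ⟨hu.1, hu.2.trans (hab.le.trans hbS)⟩
  have h03 : 0 ≤ ∫ t in b..C.t1, h t := by
    apply intervalIntegral.integral_nonneg hbS
    intro u hu
    exact hnn u ⟨(haS.trans hab.le).trans hu.1, hu.2⟩
  have h02 : (b - a) * (h t₂ / 2) ≤ ∫ t in a..b, h t := by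
    have := intervalIntegral.integral_mono_on (f := fun _ => h t₂ / 2) (g := h)
      hab.le intervalIntegrable_const hi2 (fun x hx => (hIccgt x hx).le)
    rw [intervalIntegral.integral_const, smul_eq_mul] at this
    linarith
  have hmid : 0 < (b - a) * (h t₂ / 2) := by
    apply mul_pos
    · linarith
    · linarith
  linarith

lemma exists_chain (M : Finset (Bundle n)) (hUE : UEOptimal C.φ C.t0 C.t1 M) :
    Nonempty (Chain C M) := by
  have hcov : ∀ t ∈ C.S, ∃ b ∈ M, t ∈ C.T b := by
    intro t ht
    obtain ⟨b, hbM, hb⟩ := hUE t ht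
    exact ⟨b, hbM, ⟨ht, hb⟩⟩
  have hM0 : (∅ : Bundle n) ∈ M := by
    obtain ⟨b, hbM, hb⟩ := hUE C.t0 C.t0_mem
    rcases eq_or_ne b ∅ with h | h
    · rwa [h] at hbM
    · exfalso
      have h1 := hb ∅
      rw [C.hempty0] at h1
      linarith [C.hneg b h]
  obtain ⟨k, bs, h0, hk, hmem, hstep⟩ :=
    C.chain_from M hcov _ ∅ hM0 ⟨C.t0, C.t0_mem_T_empty⟩ le_rfl
  exact ⟨⟨k, bs, h0, hk, hmem, hstep⟩⟩

lemma ue_to_mp (M : Finset (Bundle n)) (hUE : UEOptimal C.φ C.t0 C.t1 M) :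
    MPOptimal C.v C.φ C.f C.t0 C.t1 M := by
  obtain ⟨ch⟩ := C.exists_chain M hUE
  refine ⟨ch.mech, ⟨ch.mech_valid, ch.mech_IC, ch.mech_IR, ?_⟩,
    fun t ht => ch.mech_alloc_pt ht⟩
  intro m' hval' hIC' hIR'
  rw [ch.mech_Vval]
  apply C.vval_le m' hval' hIR' C.G C.G_cont
  intro t htS
  obtain ⟨hnn, hsum⟩ := hval'.1 t htS
  calc (∑ b, m'.alloc t b * C.φ b t) ≤ ∑ b, m'.alloc t b * C.G t := by
        apply Finset.sum_le_sum
        intro b _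
        exact mul_le_mul_of_nonneg_left (C.phi_le_G b t) (hnn b)
    _ = C.G t := by rw [← Finset.sum_mul, hsum, one_mul]

lemma mp_to_ue (M : Finset (Bundle n)) (hMP : MPOptimal C.v C.φ C.f C.t0 C.t1 M) :
    UEOptimal C.φ C.t0 C.t1 M := by
  obtain ⟨m, ⟨hval, hIC, hIR, hopt⟩, hptM⟩ := hMP
  have hMne : M.Nonempty := by
    obtain ⟨b, hbM, _⟩ := hptM C.t0 C.t0_mem
    exact ⟨b, hbM⟩
  set GM := fun t => M.sup' hMne (fun b => C.φ b t) with hGMdef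
  have hGMcont : ContinuousOn GM C.S :=
    ContinuousOn.finset_sup'_apply _ (fun b _ => C.phi_cont b)
  have hGMle : ∀ t ∈ C.S, GM t ≤ C.G t := by
    intro t _
    exact Finset.sup'_le _ _ fun b _ => C.phi_le_G b t
  have hup : Vval C.v C.φ C.f C.t0 C.t1 m ≤ ∫ t in C.t0..C.t1, GM t * C.f t := by
    apply C.vval_le m hval hIR GM hGMcont
    intro t htS
    obtain ⟨b, hbM, hb⟩ := hptM t htS
    rw [hb, sum_pt_mul]
    exact Finset.le_sup' (fun b => C.φ b t) hbM
  have hUEuniv : UEOptimal C.φ C.t0 C.t1 Finset.univ := by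
    intro t _
    obtain ⟨b, hbmem, hb⟩ := Finset.exists_mem_eq_sup'
      (⟨∅, Finset.mem_univ _⟩ : (Finset.univ : Finset (Bundle n)).Nonempty)
      (fun b => C.φ b t)
    exact ⟨b, Finset.mem_univ b, fun b' => hb ▸ Finset.le_sup' (fun b => C.φ b t) (Finset.mem_univ b')⟩
  obtain ⟨ch⟩ := C.exists_chain Finset.univ hUEuniv
  have hlow : (∫ t in C.t0..C.t1, C.G t * C.f t) ≤ Vval C.v C.φ C.f C.t0 C.t1 m := by
    rw [← ch.mech_Vval]
    exact hopt ch.mech ch.mech_valid ch.mech_IC ch.mech_IR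
  have hGf : IntervalIntegrable (fun t => C.G t * C.f t) volume C.t0 C.t1 := by
    apply ContinuousOn.intervalIntegrable
    rw [Set.uIcc_of_le C.ht.le]
    exact C.G_cont.mul C.hf_cont
  have hGMf : IntervalIntegrable (fun t => GM t * C.f t) volume C.t0 C.t1 := by
    apply ContinuousOn.intervalIntegrable
    rw [Set.uIcc_of_le C.ht.le]
    exact hGMcont.mul C.hf_cont
  have hdiff : (∫ t in C.t0..C.t1, (C.G t - GM t) * C.f t) ≤ 0 := by
    have heq : (∫ t in C.t0..C.t1, (C.G t - GM t) * C.f t)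
        = (∫ t in C.t0..C.t1, C.G t * C.f t) - ∫ t in C.t0..C.t1, GM t * C.f t := by
      rw [← intervalIntegral.integral_sub hGf hGMf]
      apply intervalIntegral.integral_congr
      intro t _
      ring
    linarith
  have hzero := C.integral_zero_on _ ((C.G_cont.sub hGMcont).mul C.hf_cont)
    (fun t ht => mul_nonneg (by rw [Pi.sub_apply]; linarith [hGMle t ht]) (C.hf_pos t ht).le) hdiff
  intro t ht
  have h0 := hzero t ht
  have hGeq : C.G t = GM t := by
    rcases mul_eq_zero.1 h0 with h | h
    · rw [Pi.sub_apply] at h; linarith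
    · exact absurd h (C.hf_pos t ht).ne'
  obtain ⟨b, hbM, hb⟩ := Finset.exists_mem_eq_sup' hMne (fun b => C.φ b t)
  refine ⟨b, hbM, fun b' => ?_⟩
  calc C.φ b' t ≤ C.G t := C.phi_le_G b' t
    _ = GM t := hGeq
    _ = C.φ b t := hb

end Ctx


/-- **Theorem 1.** Under Assumption MD, the minimal optimal menus of the monopolist's
virtual-surplus problem coincide with the minimal optimal menus of the unconstrained
upper-envelope problem. -/
theorem stmt1 (hn : 1 ≤ n) (t0 t1 : ℝ) (ht : t0 < t1)
    (f F : ℝ → ℝ)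
    (hf_cont : ContinuousOn f (Set.Icc t0 t1))
    (hf_pos : ∀ t ∈ Set.Icc t0 t1, 0 < f t)
    (hF : ∀ t, F t = ∫ s in t0..t, f s)
    (hF1 : F t1 = 1)
    (v vd : Bundle n → ℝ → ℝ)
    (hv_deriv : ∀ b : Bundle n, ∀ t ∈ Set.Icc t0 t1,
      HasDerivWithinAt (v b) (vd b t) (Set.Icc t0 t1) t)
    (hvd_cont : ∀ b : Bundle n, ContinuousOn (vd b) (Set.Icc t0 t1))
    (hv_empty : ∀ t ∈ Set.Icc t0 t1, v (∅ : Bundle n) t = 0)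
    (φ : Bundle n → ℝ → ℝ)
    (hφ : ∀ b : Bundle n, ∀ t ∈ Set.Icc t0 t1,
      φ b t = v b t - ((1 - F t) / f t) * vd b t)
    (hdist : ∀ b b' : Bundle n, b ≠ b' → ∃ t ∈ Set.Icc t0 t1, φ b t ≠ φ b' t)
    (hempty0 : φ (∅ : Bundle n) t0 = 0)
    (hneg : ∀ b : Bundle n, b ≠ ∅ → φ b t0 < 0)
    (hMD : ∀ b b' : Bundle n,
      MonotoneOn (fun t => φ b t - φ b' t) (Set.Icc t0 t1) ∨
      AntitoneOn (fun t => φ b t - φ b' t) (Set.Icc t0 t1))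
    (M : Finset (Bundle n)) :
    MinimalMPOptimal v φ f t0 t1 M ↔ MinimalUEOptimal φ t0 t1 M := by
  let C : Ctx n := ⟨t0, t1, ht, f, F, hf_cont, hf_pos, hF, hF1, v, vd, hv_deriv,
    hvd_cont, hv_empty, φ, hφ, hempty0, hneg, hMD⟩
  have equiv : ∀ M' : Finset (Bundle n),
      MPOptimal v φ f t0 t1 M' ↔ UEOptimal φ t0 t1 M' :=
    fun M' => ⟨fun h => C.mp_to_ue M' h, fun h => C.ue_to_mp M' h⟩
  constructor
  · rintro ⟨h1, h2⟩
    exact ⟨(equiv M).1 h1, fun M' hM' h => h2 M' hM' ((equiv M').2 h)⟩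
  · rintro ⟨h1, h2⟩
    exact ⟨(equiv M).2 h1, fun M' hM' h => h2 M' hM' ((equiv M').1 h)⟩


end Stmt1
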